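/- Let P and Q be orthogonal projections on a complex Hilbert space H. Then, in the ordering of self-adjoint operators, −(1/4)·I ≤ PQ + QP ≤ 2·I; that is, PQ + QP + (1/4)·I and 2·I − (PQ + QP) are both positive operators. -/

import Mathlib

set_option synthInstance.maxHeartbeats 400000
set_option maxHeartbeats 1000000

open RCLike ContinuousLinearMap
open scoped InnerProduct ComplexConjugate

section aux
variable {H : Type*} [NormedAddCommGroup H] [InnerProductSpace ℂ H] [CompleteSpace H]

local notation "⟪" x ", " y "⟫" => @inner ℂ _ _ x y

lemma sa_inner_swap (P : H →L[ℂ] H) (hP : IsSelfAdjoint P) (u v : H) :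
    ⟪P u, v⟫ = ⟪u, P v⟫ := by
  have h := ContinuousLinearMap.isSelfAdjoint_iff'.mp hP
  rw [← h, ContinuousLinearMap.adjoint_inner_left, h]

lemma proj_inner_eq (P : H →L[ℂ] H) (hP : IsSelfAdjoint P) (hP2 : P * P = P) (x : H) :
    re ⟪P x, x⟫ = ‖P x‖ ^ 2 := by
  have : ⟪P x, x⟫ = ⟪P x, P x⟫ := by
    conv_lhs => rw [← hP2]
    rw [ContinuousLinearMap.mul_apply, sa_inner_swap P hP]
  rw [this, inner_self_eq_norm_sq]

lemma proj_norm_le (P : H →L[ℂ] H) (hP : IsSelfAdjoint P) (hP2 : P * P = P) (x : H) :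
    ‖P x‖ ≤ ‖x‖ := by
  have h1 := proj_inner_eq P hP hP2 x
  have h2 : re ⟪P x, x⟫ ≤ ‖P x‖ * ‖x‖ := re_inner_le_norm _ _
  nlinarith [norm_nonneg (P x), norm_nonneg x]

lemma re_const_mul (c : ℝ) (z : ℂ) : re ((c : ℂ) * z) = c * re z := by
  simp

end aux

/-- For orthogonal projections `P, Q` on a complex Hilbert space,
`-(1/4)·I ≤ PQ + QP ≤ 2·I`: both `PQ + QP + (1/4)·I` and `2·I - (PQ + QP)` are
positive operators. -/
theorem anticommutator_order_bounds
    {H : Type*} [NormedAddCommGroup H] [InnerProductSpace ℂ H] [CompleteSpace H]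
    (P Q : H →L[ℂ] H) (hP : IsSelfAdjoint P) (hP2 : P * P = P)
    (hQ : IsSelfAdjoint Q) (hQ2 : Q * Q = Q) :
    (P * Q + Q * P + (1/4 : ℂ) • 1).IsPositive ∧
    ((2 : ℂ) • (1 : H →L[ℂ] H) - (P * Q + Q * P)).IsPositive := by
  have hsaPQ : IsSelfAdjoint (P * Q + Q * P) := by
    rw [IsSelfAdjoint, star_add, star_mul, star_mul, hP.star_eq, hQ.star_eq, add_comm]
  have hswapP := sa_inner_swap P hP
  have hswapQ := sa_inner_swap Q hQ
  have key : ∀ x : H, re (inner ℂ ((P * Q + Q * P) x) x : ℂ)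
      = 2 * re (inner ℂ (P x) (Q x) : ℂ) := by
    intro x
    have h1 : (inner ℂ ((P * Q + Q * P) x) x : ℂ)
        = inner ℂ (Q x) (P x) + inner ℂ (P x) (Q x) := by
      simp only [ContinuousLinearMap.add_apply, ContinuousLinearMap.mul_apply, inner_add_left]
      rw [hswapP (Q x) x, hswapQ (P x) x, ← inner_conj_symm (Q x) (P x),
        inner_conj_symm, ← inner_conj_symm (P x) (Q x), inner_conj_symm]
    rw [h1, map_add, inner_re_symm]
    ring
  have hxx : ∀ x : H, ∀ c : ℝ, re ((starRingEnd ℂ) (c : ℂ) * (inner ℂ x x : ℂ))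
      = c * ‖x‖ ^ 2 := by
    intro x c
    rw [Complex.conj_ofReal, re_const_mul, inner_self_eq_norm_sq]
  have hquarter : IsSelfAdjoint ((1/4 : ℂ) • (1 : H →L[ℂ] H)) := by
    rw [IsSelfAdjoint, star_smul, star_one]
    congr 1
    simp [Complex.ext_iff]
  have htwo : IsSelfAdjoint ((2 : ℂ) • (1 : H →L[ℂ] H)) := by
    rw [IsSelfAdjoint, star_smul, star_one]
    congr 1
    simp [Complex.ext_iff]
  constructor
  · constructor
    · exact ContinuousLinearMap.isSelfAdjoint_iff_isSymmetric.mp (hsaPQ.add (hquarter))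
    · intro x
      have happ : (P * Q + Q * P + (1/4 : ℂ) • 1) x
          = (P * Q + Q * P) x + (1/4 : ℂ) • x := by simp
      have expand : re (inner ℂ ((P * Q + Q * P + (1/4 : ℂ) • 1) x) x : ℂ)
          = 2 * re (inner ℂ (P x) (Q x) : ℂ) + (1/4) * ‖x‖ ^ 2 := by
        rw [happ, inner_add_left, map_add, key, inner_smul_left]
        have : ((1/4 : ℂ)) = ((1/4 : ℝ) : ℂ) := by norm_num
        rw [this, hxx]
      have sq : ‖P x + Q x - ((1/2 : ℂ)) • x‖ ^ 2
          = 2 * re (inner ℂ (P x) (Q x) : ℂ) + (1/4) * ‖x‖ ^ 2 := by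
        have hPx := proj_inner_eq P hP hP2 x
        have hQx := proj_inner_eq Q hQ hQ2 x
        have hc : ((1/2 : ℂ)) = ((1/2 : ℝ) : ℂ) := by norm_num
        rw [@norm_sub_sq ℂ, @norm_add_sq ℂ, inner_add_left, hc]
        simp only [inner_smul_right]
        rw [← mul_add, re_const_mul, map_add, hPx, hQx, norm_smul]
        have hn : ‖((1/2 : ℝ) : ℂ)‖ = 1/2 := by
          rw [Complex.norm_real]; norm_num
        rw [hn]
        ring
      rw [reApplyInnerSelf, expand, ← sq]
      positivity
  · constructor
    · exact ContinuousLinearMap.isSelfAdjoint_iff_isSymmetric.mp ((htwo).sub hsaPQ)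
    · intro x
      have happ : ((2 : ℂ) • (1 : H →L[ℂ] H) - (P * Q + Q * P)) x
          = (2 : ℂ) • x - (P * Q + Q * P) x := by simp
      have expand : re (inner ℂ (((2 : ℂ) • (1 : H →L[ℂ] H) - (P * Q + Q * P)) x) x : ℂ)
          = 2 * ‖x‖ ^ 2 - 2 * re (inner ℂ (P x) (Q x) : ℂ) := by
        rw [happ, inner_sub_left, map_sub, key, inner_smul_left]
        have : ((2 : ℂ)) = ((2 : ℝ) : ℂ) := by norm_num
        rw [this, hxx]
      rw [reApplyInnerSelf, expand]
      have h1 : re (inner ℂ (P x) (Q x) : ℂ) ≤ ‖P x‖ * ‖Q x‖ := re_inner_le_norm _ _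
      have h2 := proj_norm_le P hP hP2 x
      have h3 := proj_norm_le Q hQ hQ2 x
      nlinarith [norm_nonneg (P x), norm_nonneg (Q x), norm_nonneg x]
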